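/- The variance of the mixture-target/mixture-proposal estimator is at most that of the individual-target/mixture-proposal estimator: Var[MM(g)] ≤ Var[IM(g)] (both sides allowed to be infinite). Equivalently, writing I_i := ∫ p_i·g dx and I := (1/N)·Σ_i I_i, one has ∫ ( (1/N)·Σ_{i=1}^N (p_i·g/q_mix − I_i) )²·q_mix dx ≤ (1/N)·Σ_{i=1}^N ∫ (p_i·g/q_mix − I_i)²·q_mix dx, which yields Var[MM(g)] ≤ Var[IM(g)]. -/

import Mathlib

open MeasureTheory ProbabilityTheory

open MeasureTheory ProbabilityTheory Finset
open scoped ENNReal NNReal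

lemma aux_enn_sq_le (w z : ℝ) :
    ENNReal.ofReal (z ^ 2) ≤ 2 * ENNReal.ofReal ((w + z) ^ 2) + 2 * ENNReal.ofReal (w ^ 2) := by
  have h : z ^ 2 ≤ 2 * (w + z) ^ 2 + 2 * w ^ 2 := by nlinarith [sq_nonneg (w + z + w)]
  calc ENNReal.ofReal (z ^ 2) ≤ ENNReal.ofReal (2 * (w + z) ^ 2 + 2 * w ^ 2) :=
        ENNReal.ofReal_le_ofReal h
    _ = 2 * ENNReal.ofReal ((w + z) ^ 2) + 2 * ENNReal.ofReal (w ^ 2) := by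
        rw [ENNReal.ofReal_add (by positivity) (by positivity),
          ENNReal.ofReal_mul (by norm_num), ENNReal.ofReal_mul (by norm_num)]
        norm_num

lemma key_lintegral_sq_sum {Ω : Type} [MeasurableSpace Ω] (μ : Measure Ω)
    [IsProbabilityMeasure μ] {N : ℕ} (Z : Fin N → Ω → ℝ)
    (hm : ∀ i, Measurable (Z i))
    (hind : iIndepFun Z μ)
    (hint : ∀ i, Integrable (Z i) μ)
    (hmean : ∀ i, ∫ ω, Z i ω ∂μ = 0) :
    ∫⁻ ω, ENNReal.ofReal ((∑ i, Z i ω) ^ 2) ∂μ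
      = ∑ i, ∫⁻ ω, ENNReal.ofReal ((Z i ω) ^ 2) ∂μ := by
  by_cases hL2 : ∀ i, MemLp (Z i) 2 μ
  · have hS : MemLp (∑ i, Z i) 2 μ := memLp_finset_sum' _ (fun i _ => hL2 i)
    have hmeanS : μ[∑ i, Z i] = 0 := by
      rw [show (∑ i, Z i : Ω → ℝ) = fun ω => ∑ i, Z i ω from funext fun ω => by simp,
        integral_finset_sum _ (fun i _ => hint i)]
      simp [hmean]
    have h1 : ∫⁻ ω, ENNReal.ofReal ((∑ i, Z i ω) ^ 2) ∂μ = evariance (∑ i, Z i) μ := by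
      rw [evariance_eq_lintegral_ofReal, hmeanS]
      simp [Finset.sum_apply]
    have h2 : ∀ i, ∫⁻ ω, ENNReal.ofReal ((Z i ω) ^ 2) ∂μ = evariance (Z i) μ := fun i => by
      rw [evariance_eq_lintegral_ofReal, hmean i]; simp
    rw [h1, ← hS.ofReal_variance_eq,
      IndepFun.variance_sum (fun i _ => hL2 i)
        (fun i _ j _ hij => hind.indepFun hij),
      ENNReal.ofReal_sum_of_nonneg (fun i _ => variance_nonneg _ _)]
    exact Finset.sum_congr rfl fun i _ => by rw [(hL2 i).ofReal_variance_eq, h2 i]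
  · push_neg at hL2
    obtain ⟨j, hj⟩ := hL2
    have hjtop : ∫⁻ ω, ENNReal.ofReal ((Z j ω) ^ 2) ∂μ = ⊤ := by
      by_contra hfin
      apply hj
      rw [memLp_two_iff_integrable_sq (hm j).aestronglyMeasurable]
      refine ⟨((hm j).pow_const 2).aestronglyMeasurable, ?_⟩
      show (∫⁻ ω, ‖Z j ω ^ 2‖ₑ ∂μ) < ⊤
      have : ∀ ω, ‖(Z j ω) ^ 2‖ₑ = ENNReal.ofReal ((Z j ω) ^ 2) := fun ω =>
        Real.enorm_eq_ofReal (sq_nonneg _)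
      simp_rw [this]
      exact lt_of_le_of_ne le_top hfin
    have hRHS : ∑ i, ∫⁻ ω, ENNReal.ofReal ((Z i ω) ^ 2) ∂μ = ⊤ :=
      ENNReal.sum_eq_top.2 ⟨j, Finset.mem_univ j, hjtop⟩
    rw [hRHS]
    -- show LHS = ⊤
    set W : Ω → ℝ := fun ω => ∑ i ∈ Finset.univ.erase j, Z i ω with hW
    have hWeq : W = ∑ i ∈ Finset.univ.erase j, Z i := funext fun ω => by simp [hW]
    have hWm : Measurable W := Finset.measurable_sum _ fun i _ => hm i
    have hsum : ∀ ω, ∑ i, Z i ω = W ω + Z j ω := by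
      intro ω
      rw [hW, add_comm]
      exact (Finset.add_sum_erase _ _ (Finset.mem_univ j)).symm
    have hindep : IndepFun W (Z j) μ := by
      rw [hWeq]
      exact hind.indepFun_finset_sum_of_notMem hm (Finset.notMem_erase j Finset.univ)
    have hmap : μ.map (fun ω => (W ω, Z j ω)) = (μ.map W).prod (μ.map (Z j)) :=
      (indepFun_iff_map_prod_eq_prod_map_map hWm.aemeasurable (hm j).aemeasurable).1 hindep
    haveI : IsProbabilityMeasure (μ.map (Z j)) := Measure.isProbabilityMeasure_map (hm j).aemeasurable
    haveI : IsProbabilityMeasure (μ.map W) := Measure.isProbabilityMeasure_map hWm.aemeasurable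
    have hφm : Measurable (fun p : ℝ × ℝ => ENNReal.ofReal ((p.1 + p.2) ^ 2)) :=
      ((measurable_fst.add measurable_snd).pow_const 2).ennreal_ofReal
    have hzj : ∫⁻ z, ENNReal.ofReal (z ^ 2) ∂(μ.map (Z j)) = ⊤ := by
      have hsqm : Measurable fun z : ℝ => ENNReal.ofReal (z ^ 2) :=
        (measurable_id.pow_const 2).ennreal_ofReal
      rw [lintegral_map hsqm (hm j)]
      exact hjtop
    have hinner : ∀ w : ℝ, ∫⁻ z, ENNReal.ofReal ((w + z) ^ 2) ∂(μ.map (Z j)) = ⊤ := by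
      intro w
      by_contra hfin
      have hmono : (⊤ : ENNReal) ≤ 2 * ∫⁻ z, ENNReal.ofReal ((w + z) ^ 2) ∂(μ.map (Z j))
          + 2 * ENNReal.ofReal (w ^ 2) := by
        calc (⊤ : ENNReal) = ∫⁻ z, ENNReal.ofReal (z ^ 2) ∂(μ.map (Z j)) := hzj.symm
          _ ≤ ∫⁻ z, (2 * ENNReal.ofReal ((w + z) ^ 2) + 2 * ENNReal.ofReal (w ^ 2))
              ∂(μ.map (Z j)) := lintegral_mono fun z => aux_enn_sq_le w z
          _ = 2 * (∫⁻ z, ENNReal.ofReal ((w + z) ^ 2) ∂(μ.map (Z j)))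
              + 2 * ENNReal.ofReal (w ^ 2) := by
            rw [lintegral_add_right _ measurable_const,
              lintegral_const_mul' 2 _ (by norm_num), lintegral_const]
            simp
      have hne : 2 * (∫⁻ z, ENNReal.ofReal ((w + z) ^ 2) ∂(μ.map (Z j)))
          + 2 * ENNReal.ofReal (w ^ 2) ≠ ⊤ :=
        ENNReal.add_ne_top.2 ⟨ENNReal.mul_ne_top (by norm_num) hfin,
          ENNReal.mul_ne_top (by norm_num) ENNReal.ofReal_ne_top⟩
      exact hne (top_le_iff.1 hmono)
    calc ∫⁻ ω, ENNReal.ofReal ((∑ i, Z i ω) ^ 2) ∂μ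
        = ∫⁻ ω, (fun p : ℝ × ℝ => ENNReal.ofReal ((p.1 + p.2) ^ 2)) (W ω, Z j ω) ∂μ := by
          simp_rw [hsum]
      _ = ∫⁻ x, ENNReal.ofReal ((x.1 + x.2) ^ 2) ∂(μ.map (fun ω => (W ω, Z j ω))) :=
          (lintegral_map hφm (hWm.prodMk (hm j))).symm
      _ = ∫⁻ w, ∫⁻ z, ENNReal.ofReal ((w + z) ^ 2) ∂(μ.map (Z j)) ∂(μ.map W) := by
          rw [hmap, lintegral_prod _ hφm.aemeasurable]
      _ = ⊤ := by simp_rw [hinner]; simp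


/-- `Var[MM(g)] ≤ Var[IM(g)]` (both sides allowed to be
infinite, i.e. taken as `evariance` with values in `[0,∞]`), where both
estimators use i.i.d. samples `Y_1, …, Y_N` from the mixture proposal `q_mix`. -/
theorem variance_MM_le_variance_IM
    {d N : ℕ} (hN : 1 ≤ N)
    {Ω : Type} [MeasurableSpace Ω] (μ : Measure Ω) [IsProbabilityMeasure μ]
    (p q : Fin N → (Fin d → ℝ) → ℝ)
    (hp0 : ∀ i x, 0 ≤ p i x) (hq0 : ∀ i x, 0 ≤ q i x)
    (hpm : ∀ i, Measurable (p i)) (hqm : ∀ i, Measurable (q i))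
    (hp1 : ∀ i, ∫ x, p i x = 1) (hq1 : ∀ i, ∫ x, q i x = 1)
    (pmix qmix : (Fin d → ℝ) → ℝ)
    (hpmix : ∀ x, pmix x = (N : ℝ)⁻¹ * ∑ i, p i x)
    (hqmix : ∀ x, qmix x = (N : ℝ)⁻¹ * ∑ i, q i x)
    -- absolute continuity p_mix ≪ q_i
    (habs : ∀ i, ∀ᵐ x : Fin d → ℝ ∂volume, q i x = 0 → pmix x = 0)
    (g : (Fin d → ℝ) → ℝ) (hgm : Measurable g)
    -- ∫ p_mix · g² dx < ∞
    (hgL2 : Integrable (fun x => pmix x * (g x) ^ 2) volume)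
    -- Y_i i.i.d. with density q_mix
    (Y : Fin N → Ω → (Fin d → ℝ))
    (hYm : ∀ i, Measurable (Y i))
    (hYindep : iIndepFun Y μ)
    (hYlaw : ∀ i, Measure.map (Y i) μ =
      volume.withDensity (fun x => ENNReal.ofReal (qmix x))) :
    -- Var[MM(g)] ≤ Var[IM(g)]
    evariance (fun ω => (N : ℝ)⁻¹ * ∑ i, (pmix (Y i ω) / qmix (Y i ω)) * g (Y i ω)) μ
      ≤ evariance (fun ω => (N : ℝ)⁻¹ * ∑ i, (p i (Y i ω) / qmix (Y i ω)) * g (Y i ω)) μ := by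
  classical
  have hNR : (0:ℝ) < N := by
    have : (0:ℕ) < N := hN
    exact_mod_cast this
  have hNne : (N:ℝ) ≠ 0 := ne_of_gt hNR
  have hqmixm : Measurable qmix := by
    have hq : qmix = fun x => (N : ℝ)⁻¹ * ∑ i, q i x := funext hqmix
    rw [hq]
    exact measurable_const.mul (Finset.measurable_sum _ fun i _ => (hqm i))
  have hpmixm : Measurable pmix := by
    have hp : pmix = fun x => (N : ℝ)⁻¹ * ∑ i, p i x := funext hpmix
    rw [hp]
    exact measurable_const.mul (Finset.measurable_sum _ fun i _ => (hpm i))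
  have hpmix0 : ∀ x, 0 ≤ pmix x := fun x => by
    rw [hpmix]
    exact mul_nonneg (by positivity) (Finset.sum_nonneg fun i _ => hp0 i x)
  have hqmix0 : ∀ x, 0 ≤ qmix x := fun x => by
    rw [hqmix]
    exact mul_nonneg (by positivity) (Finset.sum_nonneg fun i _ => hq0 i x)
  set ν : Measure (Fin d → ℝ) := volume.withDensity (fun x => ENNReal.ofReal (qmix x)) with hν
  set f : Fin N → (Fin d → ℝ) → ℝ := fun i x => p i x / qmix x * g x with hf
  set F : (Fin d → ℝ) → ℝ := fun x => pmix x / qmix x * g x with hF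
  have hfm : ∀ i, Measurable (f i) := fun i => ((hpm i).div hqmixm).mul hgm
  have hFm : Measurable F := (hpmixm.div hqmixm).mul hgm
  have hfix : ∀ x, F x = (N : ℝ)⁻¹ * ∑ i, f i x := by
    intro x
    simp only [hF, hf]
    rw [hpmix x, mul_div_assoc, mul_assoc, Finset.sum_div, Finset.sum_mul]
  -- integrability over volume
  have hpInt : ∀ i, Integrable (p i) volume := by
    intro i
    by_contra hc
    have h0 := integral_undef hc
    rw [hp1 i] at h0
    exact one_ne_zero h0
  have hpmixInt : Integrable pmix volume := by
    have hp : pmix = fun x => (N : ℝ)⁻¹ * ∑ i, p i x := funext hpmix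
    rw [hp]
    exact (integrable_finset_sum _ fun i _ => hpInt i).const_mul _
  have hpgInt : Integrable (fun x => pmix x * |g x|) volume := by
    refine (hpmixInt.add hgL2).mono ((hpmixm.mul hgm.abs).aestronglyMeasurable)
      (ae_of_all _ fun x => ?_)
    have h1 : |g x| ≤ 1 + g x ^ 2 := by
      nlinarith [sq_abs (g x), abs_nonneg (g x), sq_nonneg (|g x| - 1)]
    have h2 : 0 ≤ pmix x := hpmix0 x
    rw [Real.norm_eq_abs, abs_of_nonneg (mul_nonneg h2 (abs_nonneg _))]
    calc pmix x * |g x| ≤ pmix x * (1 + g x ^ 2) := mul_le_mul_of_nonneg_left h1 h2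
      _ = pmix x + pmix x * g x ^ 2 := by ring
      _ ≤ ‖pmix x + pmix x * g x ^ 2‖ := le_abs_self _
  -- the key weighted bound
  have hmain_bound : ∀ i x, qmix x * |f i x| ≤ (N : ℝ) * (pmix x * |g x|) := by
    intro i x
    have hple : p i x ≤ (N : ℝ) * pmix x := by
      rw [hpmix x, ← mul_assoc, mul_inv_cancel₀ hNne, one_mul]
      exact Finset.single_le_sum (fun k _ => hp0 k x) (Finset.mem_univ i)
    by_cases hx : qmix x = 0
    · simp only [hf, hx, div_zero, zero_mul, abs_zero, mul_zero]
      exact mul_nonneg (by positivity) (mul_nonneg (hpmix0 x) (abs_nonneg _))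
    · have heq : qmix x * |f i x| = p i x * |g x| := by
        simp only [hf]
        rw [abs_mul, abs_div, abs_of_nonneg (hp0 i x), abs_of_nonneg (hqmix0 x)]
        field_simp
      rw [heq, ← mul_assoc]
      exact mul_le_mul_of_nonneg_right hple (abs_nonneg _)
  have hfIntν : ∀ i, Integrable (f i) ν := by
    intro i
    refine ⟨(hfm i).aestronglyMeasurable, ?_⟩
    show (∫⁻ x, ‖f i x‖ₑ ∂ν) < ⊤
    rw [hν, lintegral_withDensity_eq_lintegral_mul _ hqmixm.ennreal_ofReal (hfm i).enorm]
    simp only [Pi.mul_apply]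
    have hI : Integrable (fun x => (N:ℝ) * (pmix x * |g x|)) volume := hpgInt.const_mul _
    have hI2 : (∫⁻ x, ‖(N:ℝ) * (pmix x * |g x|)‖ₑ ∂volume) < ⊤ := hI.hasFiniteIntegral
    refine lt_of_le_of_lt (lintegral_mono fun x => ?_) hI2
    rw [Real.enorm_eq_ofReal_abs (f i x),
      ← ENNReal.ofReal_mul (hqmix0 x),
      Real.enorm_eq_ofReal_abs ((N:ℝ) * (pmix x * |g x|))]
    exact ENNReal.ofReal_le_ofReal ((hmain_bound i x).trans (le_abs_self _))
  have hFIntν : Integrable F ν := by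
    have hFeq : F = fun x => (N : ℝ)⁻¹ * ∑ i, f i x := funext hfix
    rw [hFeq]
    exact (integrable_finset_sum _ fun i _ => hfIntν i).const_mul _
  -- transfer along Y i
  have hmapν : ∀ i, Measure.map (Y i) μ = ν := fun i => (hYlaw i).trans hν.symm
  have hints : ∀ i (φ : (Fin d → ℝ) → ℝ), Measurable φ → Integrable φ ν →
      Integrable (fun ω => φ (Y i ω)) μ := by
    intro i φ hφ hφint
    exact (integrable_map_measure hφ.aestronglyMeasurable (hYm i).aemeasurable).1
      (by rwa [hmapν i])
  have hintegral : ∀ i (φ : (Fin d → ℝ) → ℝ), Measurable φ →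
      ∫ ω, φ (Y i ω) ∂μ = ∫ x, φ x ∂ν := by
    intro i φ hφ
    rw [← hmapν i, integral_map (hYm i).aemeasurable hφ.aestronglyMeasurable]
  have hlint : ∀ i (φ : (Fin d → ℝ) → ℝ≥0∞), Measurable φ →
      ∫⁻ ω, φ (Y i ω) ∂μ = ∫⁻ x, φ x ∂ν := by
    intro i φ hφ
    rw [← hmapν i, lintegral_map hφ (hYm i)]
  set a : Fin N → ℝ := fun i => ∫ x, f i x ∂ν with ha
  set m : ℝ := ∫ x, F x ∂ν with hmdef
  have hm_avg : m = (N : ℝ)⁻¹ * ∑ i, a i := by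
    have hFeq : F = fun x => (N : ℝ)⁻¹ * ∑ i, f i x := funext hfix
    rw [hmdef, hFeq, integral_const_mul, integral_finset_sum _ fun i _ => hfIntν i]
  set Z : Fin N → Ω → ℝ := fun i ω => f i (Y i ω) - a i with hZ
  set H : Fin N → Ω → ℝ := fun i ω => F (Y i ω) - m with hH
  have hZm : ∀ i, Measurable (Z i) := fun i => ((hfm i).comp (hYm i)).sub measurable_const
  have hHm : ∀ i, Measurable (H i) := fun i => (hFm.comp (hYm i)).sub measurable_const
  have hZint : ∀ i, Integrable (Z i) μ := fun i =>
    (hints i (f i) (hfm i) (hfIntν i)).sub (integrable_const _)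
  have hHint : ∀ i, Integrable (H i) μ := fun i =>
    (hints i F hFm hFIntν).sub (integrable_const _)
  have hZmean : ∀ i, ∫ ω, Z i ω ∂μ = 0 := by
    intro i
    simp only [hZ]
    rw [integral_sub (hints i (f i) (hfm i) (hfIntν i)) (integrable_const _),
      hintegral i (f i) (hfm i), integral_const]
    simp [ha]
  have hHmean : ∀ i, ∫ ω, H i ω ∂μ = 0 := by
    intro i
    simp only [hH]
    rw [integral_sub (hints i F hFm hFIntν) (integrable_const _),
      hintegral i F hFm, integral_const]
    simp [hmdef]
  have hZindep : iIndepFun Z μ :=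
    hYindep.comp (fun i x => f i x - a i) (fun i => (hfm i).sub measurable_const)
  have hHindep : iIndepFun H μ :=
    hYindep.comp (fun _ x => F x - m) (fun i => hFm.sub measurable_const)
  -- means of the two estimators
  have hIMmean : ∫ ω, (N:ℝ)⁻¹ * ∑ i, f i (Y i ω) ∂μ = m := by
    rw [integral_const_mul, integral_finset_sum _ fun i _ => hints i (f i) (hfm i) (hfIntν i),
      hm_avg]
    congr 1
    exact Finset.sum_congr rfl fun i _ => hintegral i (f i) (hfm i)
  have hMMmean : ∫ ω, (N:ℝ)⁻¹ * ∑ i, F (Y i ω) ∂μ = m := by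
    rw [integral_const_mul, integral_finset_sum _ fun i _ => hints i F hFm hFIntν]
    have h1 : ∀ i : Fin N, i ∈ Finset.univ → ∫ ω, F (Y i ω) ∂μ = m := fun i _ =>
      (hintegral i F hFm)
    rw [Finset.sum_congr rfl h1, Finset.sum_const, Finset.card_univ, Fintype.card_fin,
      nsmul_eq_mul, ← mul_assoc, inv_mul_cancel₀ hNne, one_mul]
  -- rewrite both evariances
  have hEvarMM : evariance (fun ω => (N:ℝ)⁻¹ * ∑ i, F (Y i ω)) μ
      = ENNReal.ofReal (((N:ℝ)⁻¹)^2) * ∑ i, ∫⁻ ω, ENNReal.ofReal ((H i ω)^2) ∂μ := by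
    rw [evariance_eq_lintegral_ofReal, hMMmean]
    have hptw : ∀ ω, ((N:ℝ)⁻¹ * ∑ i, F (Y i ω)) - m = (N:ℝ)⁻¹ * ∑ i, H i ω := by
      intro ω
      simp only [hH]
      rw [Finset.sum_sub_distrib, Finset.sum_const, Finset.card_univ, Fintype.card_fin,
        nsmul_eq_mul, mul_sub, ← mul_assoc, inv_mul_cancel₀ hNne, one_mul]
    simp_rw [hptw]
    have hsq : ∀ ω, ENNReal.ofReal (((N:ℝ)⁻¹ * ∑ i, H i ω)^2)
        = ENNReal.ofReal (((N:ℝ)⁻¹)^2) * ENNReal.ofReal ((∑ i, H i ω)^2) := by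
      intro ω
      rw [mul_pow, ENNReal.ofReal_mul (by positivity)]
    simp_rw [hsq]
    rw [lintegral_const_mul' _ _ ENNReal.ofReal_ne_top]
    congr 1
    exact key_lintegral_sq_sum μ H hHm hHindep hHint hHmean
  have hEvarIM : evariance (fun ω => (N:ℝ)⁻¹ * ∑ i, f i (Y i ω)) μ
      = ENNReal.ofReal (((N:ℝ)⁻¹)^2) * ∑ i, ∫⁻ ω, ENNReal.ofReal ((Z i ω)^2) ∂μ := by
    rw [evariance_eq_lintegral_ofReal, hIMmean]
    have hptw : ∀ ω, ((N:ℝ)⁻¹ * ∑ i, f i (Y i ω)) - m = (N:ℝ)⁻¹ * ∑ i, Z i ω := by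
      intro ω
      simp only [hZ]
      rw [Finset.sum_sub_distrib, mul_sub, hm_avg]
    simp_rw [hptw]
    have hsq : ∀ ω, ENNReal.ofReal (((N:ℝ)⁻¹ * ∑ i, Z i ω)^2)
        = ENNReal.ofReal (((N:ℝ)⁻¹)^2) * ENNReal.ofReal ((∑ i, Z i ω)^2) := by
      intro ω
      rw [mul_pow, ENNReal.ofReal_mul (by positivity)]
    simp_rw [hsq]
    rw [lintegral_const_mul' _ _ ENNReal.ofReal_ne_top]
    congr 1
    exact key_lintegral_sq_sum μ Z hZm hZindep hZint hZmean
  -- push the summand lintegrals to ν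
  have hHl : ∀ i, ∫⁻ ω, ENNReal.ofReal ((H i ω)^2) ∂μ
      = ∫⁻ x, ENNReal.ofReal ((F x - m)^2) ∂ν := by
    intro i
    have := hlint i (fun x => ENNReal.ofReal ((F x - m)^2))
      (((hFm.sub measurable_const).pow_const 2).ennreal_ofReal)
    simpa only [hH] using this
  have hZl : ∀ i, ∫⁻ ω, ENNReal.ofReal ((Z i ω)^2) ∂μ
      = ∫⁻ x, ENNReal.ofReal ((f i x - a i)^2) ∂ν := by
    intro i
    have := hlint i (fun x => ENNReal.ofReal ((f i x - a i)^2))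
      ((((hfm i).sub measurable_const).pow_const 2).ennreal_ofReal)
    simpa only [hZ] using this
  -- final pointwise Cauchy–Schwarz comparison
  have hfinal : ∑ i, ∫⁻ ω, ENNReal.ofReal ((H i ω)^2) ∂μ
      ≤ ∑ i, ∫⁻ ω, ENNReal.ofReal ((Z i ω)^2) ∂μ := by
    rw [Finset.sum_congr rfl fun i _ => hHl i, Finset.sum_congr rfl fun i _ => hZl i,
      Finset.sum_const, Finset.card_univ, Fintype.card_fin, nsmul_eq_mul]
    have hptN : ∀ x, (N:ℝ≥0∞) * ENNReal.ofReal ((F x - m)^2)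
        ≤ ∑ i, ENNReal.ofReal ((f i x - a i)^2) := by
      intro x
      have hcs : (∑ i, (f i x - a i))^2 ≤ (N:ℝ) * ∑ i, (f i x - a i)^2 := by
        have h := sq_sum_le_card_mul_sum_sq (s := Finset.univ)
          (f := fun i => f i x - a i)
        simpa using h
      have hdev : F x - m = (N:ℝ)⁻¹ * ∑ i, (f i x - a i) := by
        rw [hfix x, hm_avg, Finset.sum_sub_distrib, mul_sub]
      have hreal : (N:ℝ) * (F x - m)^2 ≤ ∑ i, (f i x - a i)^2 := by
        rw [hdev]
        have h1 : (N:ℝ) * ((N:ℝ)⁻¹ * ∑ i, (f i x - a i))^2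
            = (N:ℝ)⁻¹ * (∑ i, (f i x - a i))^2 := by
          field_simp
        rw [h1]
        calc (N:ℝ)⁻¹ * (∑ i, (f i x - a i))^2
            ≤ (N:ℝ)⁻¹ * ((N:ℝ) * ∑ i, (f i x - a i)^2) :=
              mul_le_mul_of_nonneg_left hcs (by positivity)
          _ = ∑ i, (f i x - a i)^2 := by
              rw [← mul_assoc, inv_mul_cancel₀ hNne, one_mul]
      calc (N:ℝ≥0∞) * ENNReal.ofReal ((F x - m)^2)
          = ENNReal.ofReal ((N:ℝ) * (F x - m)^2) := by
            rw [ENNReal.ofReal_mul (by positivity), ENNReal.ofReal_natCast]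
        _ ≤ ENNReal.ofReal (∑ i, (f i x - a i)^2) := ENNReal.ofReal_le_ofReal hreal
        _ = ∑ i, ENNReal.ofReal ((f i x - a i)^2) :=
            ENNReal.ofReal_sum_of_nonneg (fun i _ => sq_nonneg _)
    calc (N:ℝ≥0∞) * ∫⁻ x, ENNReal.ofReal ((F x - m)^2) ∂ν
        = ∫⁻ x, (N:ℝ≥0∞) * ENNReal.ofReal ((F x - m)^2) ∂ν :=
          (lintegral_const_mul' _ _ (ENNReal.natCast_ne_top N)).symm
      _ ≤ ∫⁻ x, ∑ i, ENNReal.ofReal ((f i x - a i)^2) ∂ν := lintegral_mono hptN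
      _ = ∑ i, ∫⁻ x, ENNReal.ofReal ((f i x - a i)^2) ∂ν :=
          lintegral_finset_sum _ (fun i _ =>
            ((((hfm i).sub measurable_const).pow_const 2).ennreal_ofReal))
  show evariance (fun ω => (N:ℝ)⁻¹ * ∑ i, F (Y i ω)) μ
      ≤ evariance (fun ω => (N:ℝ)⁻¹ * ∑ i, f i (Y i ω)) μ
  rw [hEvarMM, hEvarIM]
  exact mul_le_mul_right hfinal _
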